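/- Let p, q be coprime positive integers, let a₀ > 0 with a₀^{-2} ≤ 1/q, and let j ≥ 0 and k be integers such that |pj/q − k²| ≥ 1/q. Then for every l ∈ {0,1}, |λ_{j,k,l}(a₀)| ≥ pj/q² + k²(1/q − a₀^{-2}). -/
import Mathlib


/-- The eigenvalue `λ_{j,k,l}(a) = (pj/q)² − k⁴ + (−1)^l a^{-2} k²`. -/
noncomputable def lam (p q : ℕ) (a : ℝ) (j k : ℤ) (l : Fin 2) : ℝ :=
  ((p : ℝ) * j / q) ^ 2 - (k : ℝ) ^ 4 + (-1) ^ (l : ℕ) * a⁻¹ ^ 2 * (k : ℝ) ^ 2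

theorem stmt4 (p q : ℕ) (hp : 0 < p) (hq : 0 < q) (hpq : Nat.Coprime p q)
    (a₀ : ℝ) (ha₀ : 0 < a₀) (ha₀q : a₀⁻¹ ^ 2 ≤ 1 / q)
    (j k : ℤ) (hj : 0 ≤ j)
    (hjk : 1 / (q : ℝ) ≤ |(p : ℝ) * j / q - (k : ℝ) ^ 2|) (l : Fin 2) :
    (p : ℝ) * j / q ^ 2 + (k : ℝ) ^ 2 * (1 / q - a₀⁻¹ ^ 2) ≤ |lam p q a₀ j k l| := by
  have hj' : (0:ℝ) ≤ (j:ℝ) := by exact_mod_cast hj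
  have hq' : (0:ℝ) < (q:ℝ) := by exact_mod_cast hq
  set X : ℝ := (p:ℝ) * j / q with hXdef
  set K : ℝ := (k:ℝ) ^ 2 with hKdef
  have hX0 : 0 ≤ X := by positivity
  have hK0 : 0 ≤ K := sq_nonneg _
  have hε0 : 0 ≤ a₀⁻¹ ^ 2 := by positivity
  have hlam : lam p q a₀ j k l = (X ^ 2 - K ^ 2) + (-1) ^ (l:ℕ) * a₀⁻¹ ^ 2 * K := by
    simp [lam, hXdef, hKdef]; ring
  have habsB : |(-1:ℝ) ^ (l:ℕ) * a₀⁻¹ ^ 2 * K| = a₀⁻¹ ^ 2 * K := by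
    rw [abs_mul, abs_mul, abs_pow, abs_neg, abs_one, one_pow, one_mul,
      abs_of_nonneg hε0, abs_of_nonneg hK0]
  have h1 : |X ^ 2 - K ^ 2| = (X + K) * |X - K| := by
    rw [sq_sub_sq, abs_mul, abs_of_nonneg (by linarith)]
  have h2 : |X ^ 2 - K ^ 2| - |(-1:ℝ) ^ (l:ℕ) * a₀⁻¹ ^ 2 * K| ≤ |lam p q a₀ j k l| := by
    rw [hlam]
    have := abs_sub_abs_le_abs_sub (X ^ 2 - K ^ 2) (-((-1:ℝ) ^ (l:ℕ) * a₀⁻¹ ^ 2 * K))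
    simpa [sub_neg_eq_add] using this
  have h3 : (X + K) * (1 / q) ≤ (X + K) * |X - K| :=
    mul_le_mul_of_nonneg_left hjk (by linarith)
  have hXq : X * (1 / q) = (p:ℝ) * j / q ^ 2 := by
    rw [hXdef]; ring
  rw [habsB, h1] at h2
  nlinarith [h2, h3, hXq, mul_nonneg hK0 hε0]
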